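/- Every tree on n ≥ 2 vertices has a path decomposition of width at most log₂(n). -/

import Mathlib

set_option linter.unusedSectionVars false
open List Finset

variable {V : Type} [DecidableEq V]

/-- indices of bags containing `u` form an interval. -/
def IntvIn (u : V) (L : List (Finset V)) : Prop :=
  ∀ i j k : ℕ, i ≤ j → j ≤ k → u ∈ L.getD i ∅ → u ∈ L.getD k ∅ → u ∈ L.getD j ∅

lemma mem_of_getD {u : V} {L : List (Finset V)} {i : ℕ} (h : u ∈ L.getD i ∅) :
    i < L.length ∧ ∃ b ∈ L, u ∈ b := by
  rcases lt_or_ge i L.length with hi | hi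
  · rw [List.getD_eq_getElem _ _ hi] at h
    exact ⟨hi, L[i], List.getElem_mem hi, h⟩
  · rw [List.getD_eq_default _ _ hi] at h
    simp at h

lemma intvIn_of_all {u : V} {L : List (Finset V)} (h : ∀ b ∈ L, u ∈ b) : IntvIn u L := by
  intro i j k hij hjk hi hk
  have hk' := (mem_of_getD hk).1
  have hj : j < L.length := lt_of_le_of_lt hjk hk'
  rw [List.getD_eq_getElem _ _ hj]
  exact h _ (List.getElem_mem hj)

lemma intvIn_of_not {u : V} {L : List (Finset V)} (h : ∀ b ∈ L, u ∉ b) : IntvIn u L := by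
  intro i j k _ _ hi _
  obtain ⟨-, b, hb, hub⟩ := mem_of_getD hi
  exact absurd hub (h b hb)

lemma intvIn_singleton (u : V) (b : Finset V) : IntvIn u [b] := by
  intro i j k hij hjk hi hk
  have hk' := (mem_of_getD hk).1
  simp only [List.length_singleton] at hk'
  interval_cases k
  interval_cases j
  interval_cases i
  exact hi

lemma intvIn_append {u : V} {L₁ L₂ : List (Finset V)} (h₁ : IntvIn u L₁) (h₂ : IntvIn u L₂)
    (hmid : (∃ b ∈ L₁, u ∈ b) → (∃ b ∈ L₂, u ∈ b) →
      u ∈ L₁.getD (L₁.length - 1) ∅ ∧ u ∈ L₂.getD 0 ∅) :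
    IntvIn u (L₁ ++ L₂) := by
  intro i j k hij hjk hi hk
  rcases lt_or_ge k L₁.length with hkl | hkl
  · -- everything inside L₁
    rw [List.getD_append _ _ _ _ (lt_of_le_of_lt hij (lt_of_le_of_lt hjk hkl))] at hi
    rw [List.getD_append _ _ _ _ hkl] at hk
    rw [List.getD_append _ _ _ _ (lt_of_le_of_lt hjk hkl)]
    exact h₁ i j k hij hjk hi hk
  · rcases le_or_gt L₁.length i with hil | hil
    · rw [List.getD_append_right _ _ _ _ hil] at hi
      rw [List.getD_append_right _ _ _ _ hkl] at hk
      rw [List.getD_append_right _ _ _ _ (le_trans hil hij)]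
      exact h₂ _ _ _ (by omega) (by omega) hi hk
    · -- i in L₁, k in L₂
      rw [List.getD_append _ _ _ _ hil] at hi
      rw [List.getD_append_right _ _ _ _ hkl] at hk
      obtain ⟨hlast, hhead⟩ := hmid (mem_of_getD hi).2 (mem_of_getD hk).2
      rcases lt_or_ge j L₁.length with hjl | hjl
      · rw [List.getD_append _ _ _ _ hjl]
        exact h₁ i j (L₁.length - 1) hij (by omega) hi hlast
      · rw [List.getD_append_right _ _ _ _ hjl]
        exact h₂ 0 (j - L₁.length) (k - L₁.length) (by omega) (by omega) hhead hk

lemma intvIn_join {u : V} {Ls : List (List (Finset V))}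
    (h : ∀ L ∈ Ls, IntvIn u L)
    (hsep : Ls.Pairwise (fun L₁ L₂ => ¬((∃ b ∈ L₁, u ∈ b) ∧ (∃ b ∈ L₂, u ∈ b)))) :
    IntvIn u Ls.flatten := by
  induction Ls with
  | nil => exact intvIn_of_not (by simp)
  | cons L Ls ih =>
    rw [List.flatten_cons]
    refine intvIn_append (h L (by simp)) (ih (fun L' hL' => h L' (by simp [hL'])) hsep.of_cons) ?_
    intro h1 h2
    obtain ⟨b, hb, hub⟩ := h2
    rw [List.mem_flatten] at hb
    obtain ⟨L', hL', hbL'⟩ := hb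
    exact absurd ⟨h1, b, hbL', hub⟩ ((List.pairwise_cons.mp hsep).1 L' hL')

lemma intvIn_map_insert {u v : V} {L : List (Finset V)} (h : IntvIn u L) :
    IntvIn u (L.map (insert v)) := by
  rcases eq_or_ne u v with rfl | huv
  · exact intvIn_of_all (by simp +contextual [List.mem_map])
  · intro i j k hij hjk hi hk
    have conv : ∀ n : ℕ, u ∈ (L.map (insert v)).getD n ∅ ↔ u ∈ L.getD n ∅ := by
      intro n
      rcases lt_or_ge n L.length with hn | hn
      · rw [List.getD_eq_getElem _ _ (show n < (L.map (insert v)).length by simpa using hn),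
          List.getD_eq_getElem _ _ hn, List.getElem_map]
        simp [Finset.mem_insert, huv]
      · rw [List.getD_eq_default _ _ (by simpa using hn), List.getD_eq_default _ _ hn]
    rw [conv] at hi hk ⊢
    exact h i j k hij hjk hi hk

section Abstract

variable {V : Type} [Fintype V] [DecidableEq V] (p : V → V) (r : V) (d : V → ℕ)

variable (hd0 : ∀ v, d v = 0 ↔ v = r) (hp : ∀ v, v ≠ r → d (p v) + 1 = d v)
  (hpr : p r = r)

/-- descendants of `v` in the rooted tree. -/
def desc (v : V) : Finset V := Finset.univ.filter (fun u => p^[d u - d v] u = v)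

/-- children of `v`. -/
def children (v : V) : Finset V := Finset.univ.filter (fun c => p c = v ∧ c ≠ v)

lemma self_mem_desc (v : V) : v ∈ desc p d v := by simp [desc]

include hd0 hp in
lemma iter_dist : ∀ k u, k ≤ d u → d (p^[k] u) = d u - k := by
  intro k
  induction k with
  | zero => simp
  | succ k ih =>
    intro u hk
    rw [Function.iterate_succ_apply']
    have h1 : d (p^[k] u) = d u - k := ih u (by omega)
    have h2 : p^[k] u ≠ r := by
      intro h
      rw [h] at h1
      have := (hd0 r).mpr rfl
      omega
    have := hp _ h2
    omega

include hd0 hp in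
lemma iter_root (u : V) : p^[d u] u = r := by
  have := iter_dist p r d hd0 hp (d u) u le_rfl
  simp only [Nat.sub_self] at this
  exact (hd0 _).mp this

lemma mem_desc_le {u v : V} (h : u ∈ desc p d v) : d v ≤ d u := by
  by_contra hlt
  push_neg at hlt
  simp only [desc, Finset.mem_filter] at h
  have h0 : d u - d v = 0 := by omega
  rw [h0] at h
  simp only [Function.iterate_zero, id_eq] at h
  rw [h.2] at hlt
  omega

include hd0 hp in
lemma desc_root : desc p d r = Finset.univ := by
  ext u
  simp only [desc, Finset.mem_filter, Finset.mem_univ, true_and, iff_true]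
  have hdr : d r = 0 := (hd0 r).mpr rfl
  rw [hdr, Nat.sub_zero]
  exact iter_root p r d hd0 hp u

include hd0 hp hpr in
lemma children_dist {v c : V} (hc : c ∈ children p v) : d c = d v + 1 := by
  simp only [children, Finset.mem_filter] at hc
  have hcr : c ≠ r := by
    rintro rfl
    exact hc.2.2 (by rw [← hc.2.1, hpr])
  have := hp c hcr
  rw [hc.2.1] at this
  omega

include hd0 hp hpr in
lemma desc_child_subset {v c : V} (hc : c ∈ children p v) : desc p d c ⊆ desc p d v := by
  intro u hu
  have hdc : d c = d v + 1 := children_dist p r d hd0 hp hpr hc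
  have hdu : d c ≤ d u := mem_desc_le p d hu
  simp only [desc, Finset.mem_filter] at hu ⊢
  refine ⟨Finset.mem_univ _, ?_⟩
  have he : d u - d v = (d u - d c) + 1 := by omega
  rw [he, Function.iterate_succ_apply', hu.2]
  simp only [children, Finset.mem_filter] at hc
  exact hc.2.1

include hd0 hp hpr in
lemma desc_children_disjoint {v c₁ c₂ : V} (h₁ : c₁ ∈ children p v) (h₂ : c₂ ∈ children p v)
    (hne : c₁ ≠ c₂) : Disjoint (desc p d c₁) (desc p d c₂) := by
  rw [Finset.disjoint_left]
  intro u hu1 hu2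
  simp only [desc, Finset.mem_filter] at hu1 hu2
  rw [children_dist p r d hd0 hp hpr h₁] at hu1
  rw [children_dist p r d hd0 hp hpr h₂] at hu2
  exact hne (hu1.2.symm.trans hu2.2)

include hd0 hp hpr in
lemma not_mem_desc_child {v c : V} (hc : c ∈ children p v) : v ∉ desc p d c := by
  intro h
  have := mem_desc_le p d h
  have := children_dist p r d hd0 hp hpr hc
  omega

include hd0 hp in
lemma exists_child_of_mem_desc {u v : V} (hu : u ∈ desc p d v) (hne : u ≠ v) :
    ∃ c ∈ children p v, u ∈ desc p d c := by
  have hdv : d v ≤ d u := mem_desc_le p d hu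
  simp only [desc, Finset.mem_filter] at hu
  have he0 : d u - d v ≠ 0 := by
    intro h
    rw [h] at hu
    exact hne (by simpa using hu.2)
  obtain ⟨e', he⟩ : ∃ e', d u - d v = e' + 1 := ⟨d u - d v - 1, by omega⟩
  rw [he] at hu
  have he' : e' ≤ d u := by omega
  refine ⟨p^[e'] u, ?_, ?_⟩
  · simp only [children, Finset.mem_filter]
    refine ⟨Finset.mem_univ _, ?_, ?_⟩
    · rw [← Function.iterate_succ_apply' p e' u]
      exact hu.2
    · intro h
      have := iter_dist p r d hd0 hp e' u he'
      rw [h] at this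
      omega
  · simp only [desc, Finset.mem_filter]
    have hdc : d (p^[e'] u) = d u - e' := iter_dist p r d hd0 hp e' u he'
    refine ⟨Finset.mem_univ _, ?_⟩
    rw [hdc]
    have : d u - (d u - e') = e' := by omega
    rw [this]

include hd0 hp hpr in
lemma desc_eq_insert_biUnion (v : V) :
    desc p d v = insert v ((children p v).biUnion (fun c => desc p d c)) := by
  ext u
  simp only [Finset.mem_insert, Finset.mem_biUnion]
  constructor
  · intro hu
    rcases eq_or_ne u v with rfl | hne
    · exact Or.inl rfl
    · exact Or.inr (exists_child_of_mem_desc p r d hd0 hp hu hne)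
  · rintro (rfl | ⟨c, hc, hu⟩)
    · exact self_mem_desc p d u
    · exact desc_child_subset p r d hd0 hp hpr hc hu

include hd0 hp hpr in
lemma card_desc (v : V) :
    (desc p d v).card = 1 + ∑ c ∈ children p v, (desc p d c).card := by
  have hnot : v ∉ (children p v).biUnion (fun c => desc p d c) := by
    simp only [Finset.mem_biUnion]
    rintro ⟨c, hc, hv⟩
    exact not_mem_desc_child p r d hd0 hp hpr hc hv
  have hdisj : ∀ c₁ ∈ children p v, ∀ c₂ ∈ children p v, c₁ ≠ c₂ →
      Disjoint (desc p d c₁) (desc p d c₂) := by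
    intro c₁ h₁ c₂ h₂ hne
    exact desc_children_disjoint p r d hd0 hp hpr h₁ h₂ hne
  rw [desc_eq_insert_biUnion p r d hd0 hp hpr v, Finset.card_insert_of_notMem hnot,
    Finset.card_biUnion hdisj]
  omega

include hd0 hp hpr in
lemma card_desc_child_lt {v c : V} (hc : c ∈ children p v) :
    (desc p d c).card < (desc p d v).card := by
  rw [card_desc p r d hd0 hp hpr v]
  have : (desc p d c).card ≤ ∑ c' ∈ children p v, (desc p d c').card :=
    Finset.single_le_sum (f := fun c => (desc p d c).card) (fun _ _ => Nat.zero_le _) hc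
  omega


noncomputable def heavy (v : V) (h : (children p v).Nonempty) : V :=
  Classical.choose (Finset.exists_max_image _ (fun c => (desc p d c).card) h)

lemma heavy_spec (v : V) (h : (children p v).Nonempty) :
    heavy p d v h ∈ children p v ∧
      ∀ c ∈ children p v, (desc p d c).card ≤ (desc p d (heavy p d v h)).card := by
  have := Classical.choose_spec (Finset.exists_max_image _ (fun c => (desc p d c).card) h)
  exact ⟨this.1, this.2⟩

noncomputable def bags : ℕ → V → List (Finset V)
  | 0, v => [{v}]
  | (k+1), v =>
    if h : (children p v).Nonempty then
      ((((children p v).erase (heavy p d v h)).toList.map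
          (fun c => (bags k c).map (insert v))).flatten)
        ++ ({v, heavy p d v h} : Finset V) :: bags k (heavy p d v h)
    else [{v}]

structure BagsSpec (v : V) (L : List (Finset V)) : Prop where
  ne : L ≠ []
  head : v ∈ L.getD 0 ∅
  subs : ∀ b ∈ L, b ⊆ desc p d v
  cover : ∀ u ∈ desc p d v, ∃ b ∈ L, u ∈ b
  edge : ∀ u ∈ desc p d v, u ≠ v → ∃ b ∈ L, u ∈ b ∧ p u ∈ b
  size : ∀ b ∈ L, b.card ≤ Nat.log 2 (desc p d v).card + 1
  intv : ∀ u : V, IntvIn u L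

include hd0 hp hpr in
lemma bags_spec : ∀ k (v : V), (desc p d v).card ≤ k → BagsSpec p d v (bags p d k v) := by
  intro k
  induction k with
  | zero =>
    intro v hv
    have h1 : 0 < (desc p d v).card := Finset.card_pos.mpr ⟨v, self_mem_desc p d v⟩
    omega
  | succ k ih =>
    intro v hv
    by_cases hC : (children p v).Nonempty
    · -- children nonempty
      obtain ⟨hmC, hmax⟩ := heavy_spec p d v hC
      set m := heavy p d v hC with hm
      set cs := ((children p v).erase m).toList with hcs
      set A := (cs.map (fun c => (bags p d k c).map (insert v))).flatten with hA
      set H := bags p d k m with hH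
      have hL : bags p d (k+1) v = A ++ ({v, m} : Finset V) :: H := by
        rw [bags, dif_pos hC]
      have hmv : m ≠ v := by
        simp only [children, Finset.mem_filter] at hmC; exact hmC.2.2
      have hmem_cs : ∀ {c}, c ∈ cs → c ∈ children p v ∧ c ≠ m := by
        intro c hc
        rw [hcs, Finset.mem_toList, Finset.mem_erase] at hc
        exact ⟨hc.2, hc.1⟩
      have hcard_c : ∀ c ∈ children p v, (desc p d c).card ≤ k := by
        intro c hc
        have := card_desc_child_lt p r d hd0 hp hpr hc
        omega
      have ihc : ∀ {c}, c ∈ children p v → BagsSpec p d c (bags p d k c) := by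
        intro c hc; exact ih c (hcard_c c hc)
      have ihm : BagsSpec p d m H := ihc hmC
      have hdesc_c : ∀ {c}, c ∈ children p v → desc p d c ⊆ desc p d v := by
        intro c hc; exact desc_child_subset p r d hd0 hp hpr hc
      have hmdesc : m ∈ desc p d v := hdesc_c hmC (self_mem_desc p d m)
      have hvdesc : v ∈ desc p d v := self_mem_desc p d v
      -- membership in A
      have memA : ∀ {b}, b ∈ A → ∃ c, (c ∈ children p v ∧ c ≠ m) ∧
          ∃ b' ∈ bags p d k c, b = insert v b' := by
        intro b hb
        rw [hA, List.mem_flatten] at hb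
        obtain ⟨Lc, hLc, hbLc⟩ := hb
        rw [List.mem_map] at hLc
        obtain ⟨c, hc, rfl⟩ := hLc
        rw [List.mem_map] at hbLc
        obtain ⟨b', hb', rfl⟩ := hbLc
        exact ⟨c, hmem_cs hc, b', hb', rfl⟩
      have vinA : ∀ b ∈ A, v ∈ b := by
        intro b hb
        obtain ⟨c, _, b', _, rfl⟩ := memA hb
        exact Finset.mem_insert_self v b'
      have uA_desc : ∀ {b u}, b ∈ A → u ∈ b → u ≠ v →
          ∃ c, c ∈ children p v ∧ c ≠ m ∧ u ∈ desc p d c := by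
        intro b u hb hub huv
        obtain ⟨c, hc, b', hb', rfl⟩ := memA hb
        rw [Finset.mem_insert] at hub
        rcases hub with rfl | hub
        · exact absurd rfl huv
        · exact ⟨c, hc.1, hc.2, (ihc hc.1).subs b' hb' hub⟩
      -- subtree size facts
      have hcards : ∀ c ∈ children p v, c ≠ m → (desc p d c).card * 2 ≤ (desc p d v).card := by
        intro c hc hcm
        have hpair : ({c, m} : Finset V) ⊆ children p v := by
          intro x hx
          rw [Finset.mem_insert, Finset.mem_singleton] at hx
          rcases hx with rfl | rfl
          · exact hc
          · exact hmC
        have h1 : (desc p d c).card + (desc p d m).card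
            ≤ ∑ c' ∈ children p v, (desc p d c').card := by
          rw [← Finset.sum_pair (f := fun c' => (desc p d c').card) hcm]
          exact Finset.sum_le_sum_of_subset hpair
        have h2 := hmax c hc
        have h3 := card_desc p r d hd0 hp hpr v
        omega
      have hlog_light : ∀ c ∈ children p v, c ≠ m →
          Nat.log 2 (desc p d c).card + 1 ≤ Nat.log 2 (desc p d v).card := by
        intro c hc hcm
        have h0 : (desc p d c).card ≠ 0 :=
          (Finset.card_pos.mpr ⟨c, self_mem_desc p d c⟩).ne'
        rw [← Nat.log_mul_base (by norm_num) h0]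
        exact Nat.log_mono_right (hcards c hc hcm)
      have h2s : 2 ≤ (desc p d v).card := by
        have h1 : (desc p d m).card ≤ ∑ c' ∈ children p v, (desc p d c').card :=
          Finset.single_le_sum (f := fun c' => (desc p d c').card)
            (fun _ _ => Nat.zero_le _) hmC
        have h2 : 0 < (desc p d m).card := Finset.card_pos.mpr ⟨m, self_mem_desc p d m⟩
        have h3 := card_desc p r d hd0 hp hpr v
        omega
      have hlogpos : 1 ≤ Nat.log 2 (desc p d v).card := Nat.log_pos (by norm_num) h2s
      have hmle : (desc p d m).card ≤ (desc p d v).card :=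
        Finset.card_le_card (hdesc_c hmC)
      rw [hL]
      constructor
      · simp
      · -- head
        rcases hcs' : cs with _ | ⟨c₁, cs'⟩
        · rw [hcs'] at hA
          simp only [List.map_nil, List.flatten_nil] at hA
          rw [hA]
          simp
        · have hc₁ : c₁ ∈ children p v ∧ c₁ ≠ m := hmem_cs (by rw [hcs']; simp)
          obtain ⟨b₀, t, hb₀⟩ := List.exists_cons_of_ne_nil (ihc hc₁.1).ne
          have hv₀ : v ∈ (A ++ ({v, m} : Finset V) :: H).getD 0 ∅ := by
            rw [hA, hcs', List.map_cons, List.flatten_cons, hb₀]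
            simp
          exact hv₀
      · -- subs
        intro b hb
        rw [List.mem_append, List.mem_cons] at hb
        rcases hb with hb | hb | hb
        · obtain ⟨c, hc, b', hb', rfl⟩ := memA hb
          exact Finset.insert_subset hvdesc (((ihc hc.1).subs b' hb').trans (hdesc_c hc.1))
        · rw [hb]
          intro x hx
          rw [Finset.mem_insert, Finset.mem_singleton] at hx
          rcases hx with rfl | rfl
          · exact hvdesc
          · exact hmdesc
        · exact (ihm.subs b hb).trans (hdesc_c hmC)
      · -- cover
        intro u hu
        rcases eq_or_ne u v with rfl | huv
        · exact ⟨{u, m}, by simp, by simp⟩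
        · obtain ⟨c, hc, huc⟩ := exists_child_of_mem_desc p r d hd0 hp hu huv
          rcases eq_or_ne c m with rfl | hcm
          · obtain ⟨b, hb, hub⟩ := ihm.cover u huc
            exact ⟨b, by simp [hb], hub⟩
          · obtain ⟨b, hb, hub⟩ := (ihc hc).cover u huc
            refine ⟨insert v b, ?_, Finset.mem_insert_of_mem hub⟩
            rw [List.mem_append]
            left
            rw [hA, List.mem_flatten]
            refine ⟨(bags p d k c).map (insert v), ?_, ?_⟩
            · rw [List.mem_map]
              exact ⟨c, by rw [hcs, Finset.mem_toList, Finset.mem_erase]; exact ⟨hcm, hc⟩, rfl⟩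
            · rw [List.mem_map]; exact ⟨b, hb, rfl⟩
      · -- edge
        intro u hu huv
        obtain ⟨c, hc, huc⟩ := exists_child_of_mem_desc p r d hd0 hp hu huv
        have hpu : p u = v ∨ u ≠ c := by
          rcases eq_or_ne u c with rfl | h
          · left
            simp only [children, Finset.mem_filter] at hc
            exact hc.2.1
          · right; exact h
        rcases eq_or_ne c m with rfl | hcm
        · rcases eq_or_ne u m with rfl | hum
          · refine ⟨{v, m}, by simp, by simp, ?_⟩
            have hpm : p m = v := by
              simp only [children, Finset.mem_filter] at hmC; exact hmC.2.1
            rw [hpm]; simp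
          · obtain ⟨b, hb, hub, hpub⟩ := ihm.edge u huc hum
            exact ⟨b, by simp [hb], hub, hpub⟩
        · -- light child
          have hcmem : ((bags p d k c).map (insert v)) ∈ cs.map
              (fun c => (bags p d k c).map (insert v)) := by
            rw [List.mem_map]
            exact ⟨c, by rw [hcs, Finset.mem_toList, Finset.mem_erase]; exact ⟨hcm, hc⟩, rfl⟩
          rcases eq_or_ne u c with rfl | huc'
          · -- u is the child itself; use head bag of its chunk
            have hne := (ihc hc).ne
            have hhead := (ihc hc).head
            have hlen : 0 < (bags p d k u).length := List.length_pos_iff.mpr hne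
            rw [List.getD_eq_getElem _ _ hlen] at hhead
            refine ⟨insert v ((bags p d k u)[0]), ?_, Finset.mem_insert_of_mem hhead, ?_⟩
            · rw [List.mem_append]
              left
              rw [hA, List.mem_flatten]
              refine ⟨_, hcmem, ?_⟩
              rw [List.mem_map]
              exact ⟨_, List.getElem_mem hlen, rfl⟩
            · have : p u = v := by
                simp only [children, Finset.mem_filter] at hc; exact hc.2.1
              rw [this]; exact Finset.mem_insert_self v _
          · obtain ⟨b, hb, hub, hpub⟩ := (ihc hc).edge u huc huc'
            refine ⟨insert v b, ?_, Finset.mem_insert_of_mem hub, Finset.mem_insert_of_mem hpub⟩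
            rw [List.mem_append]
            left
            rw [hA, List.mem_flatten]
            refine ⟨_, hcmem, ?_⟩
            rw [List.mem_map]
            exact ⟨b, hb, rfl⟩
      · -- size
        intro b hb
        rw [List.mem_append, List.mem_cons] at hb
        rcases hb with hb | hb | hb
        · obtain ⟨c, hc, b', hb', rfl⟩ := memA hb
          have h1 := (ihc hc.1).size b' hb'
          have h2 := hlog_light c hc.1 hc.2
          have h3 := Finset.card_insert_le v b'
          omega
        · rw [hb]
          have : ({v, m} : Finset V).card ≤ 2 := by
            have := Finset.card_insert_le v ({m} : Finset V)
            simpa using this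
          omega
        · have h1 := ihm.size b hb
          have h2 := Nat.log_mono_right (b := 2) hmle
          omega
      · -- interval
        intro u
        have hsplit : A ++ ({v, m} : Finset V) :: H = (A ++ [({v, m} : Finset V)]) ++ H := by
          simp
        rw [hsplit]
        have hHdesc : ∀ b ∈ H, b ⊆ desc p d m := ihm.subs
        rcases eq_or_ne u v with rfl | huv
        · -- u = v
          refine intvIn_append ?_ (ihm.intv u) ?_
          · refine intvIn_of_all ?_
            intro b hb
            rw [List.mem_append, List.mem_singleton] at hb
            rcases hb with hb | rfl
            · exact vinA b hb
            · simp
          · rintro - ⟨b, hb, hub⟩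
            exact absurd (hHdesc b hb hub) (not_mem_desc_child p r d hd0 hp hpr hmC)
        · -- u ≠ v
          have hintvA : IntvIn u A := by
            rw [hA]
            refine intvIn_join ?_ ?_
            · intro L hL
              rw [List.mem_map] at hL
              obtain ⟨c, hc, rfl⟩ := hL
              exact intvIn_map_insert ((ihc (hmem_cs hc).1).intv u)
            · rw [List.pairwise_map]
              refine List.Pairwise.imp_of_mem ?_ (Finset.nodup_toList _)
              intro c c' hc hc' hne
              rintro ⟨⟨b, hb, hub⟩, ⟨b', hb', hub'⟩⟩
              rw [List.mem_map] at hb hb'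
              obtain ⟨b₁, hb₁, rfl⟩ := hb
              obtain ⟨b₁', hb₁', rfl⟩ := hb'
              rw [Finset.mem_insert] at hub hub'
              rcases hub with rfl | hub
              · exact huv rfl
              rcases hub' with rfl | hub'
              · exact huv rfl
              have h1 : u ∈ desc p d c := (ihc (hmem_cs hc).1).subs b₁ hb₁ hub
              have h2 : u ∈ desc p d c' := (ihc (hmem_cs hc').1).subs b₁' hb₁' hub'
              exact Finset.disjoint_left.mp
                (desc_children_disjoint p r d hd0 hp hpr (hmem_cs hc).1 (hmem_cs hc').1 hne)
                h1 h2
          have hA'intv : IntvIn u (A ++ [({v, m} : Finset V)]) := by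
            refine intvIn_append hintvA (intvIn_singleton u _) ?_
            rintro ⟨b, hb, hub⟩ ⟨b', hb', hub'⟩
            exfalso
            rw [List.mem_singleton] at hb'
            subst hb'
            rw [Finset.mem_insert, Finset.mem_singleton] at hub'
            rcases hub' with rfl | rfl
            · exact huv rfl
            · obtain ⟨c, hc, hcm, humc⟩ := uA_desc hb hub huv
              exact Finset.disjoint_left.mp
                (desc_children_disjoint p r d hd0 hp hpr hc hmC hcm) humc
                (self_mem_desc p d m)
          refine intvIn_append hA'intv (ihm.intv u) ?_
          rintro ⟨b, hb, hub⟩ ⟨b', hb', hub'⟩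
          have humdesc : u ∈ desc p d m := hHdesc b' hb' hub'
          have hbu : b = {v, m} := by
            rw [List.mem_append, List.mem_singleton] at hb
            rcases hb with hb | rfl
            · exfalso
              obtain ⟨c, hc, hcm, humc⟩ := uA_desc hb hub huv
              exact Finset.disjoint_left.mp
                (desc_children_disjoint p r d hd0 hp hpr hc hmC hcm) humc humdesc
            · rfl
          have hum : u = m := by
            subst hbu
            rw [Finset.mem_insert, Finset.mem_singleton] at hub
            rcases hub with rfl | rfl
            · exact absurd rfl huv
            · rfl
          subst hum
          constructor
          · -- last bag of A ++ [{v,m}]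
            have hlen : (A ++ [({v, m} : Finset V)]).length - 1 = A.length := by
              simp
            rw [hlen, List.getD_append_right _ _ _ _ le_rfl]
            simp
          · exact ihm.head
    · -- children empty
      have hL : bags p d (k+1) v = [{v}] := by rw [bags, dif_neg hC]
      have hcd := card_desc p r d hd0 hp hpr v
      rw [Finset.not_nonempty_iff_eq_empty.mp hC] at hcd
      simp only [Finset.sum_empty, Nat.add_zero] at hcd
      have hdesc : desc p d v = {v} := by
        obtain ⟨a, ha⟩ := Finset.card_eq_one.mp hcd
        have hvmem := self_mem_desc p d v
        rw [ha] at hvmem ⊢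
        rw [Finset.mem_singleton] at hvmem
        rw [hvmem]
      rw [hL]
      constructor
      · simp
      · simp
      · intro b hb
        rw [List.mem_singleton] at hb
        subst hb
        rw [hdesc]
      · intro u hu
        rw [hdesc, Finset.mem_singleton] at hu
        subst hu
        exact ⟨{u}, by simp, by simp⟩
      · intro u hu huv
        rw [hdesc, Finset.mem_singleton] at hu
        exact absurd hu huv
      · intro b hb
        rw [List.mem_singleton] at hb
        subst hb
        simp
      · intro u
        exact intvIn_singleton u _


include hd0 hp hpr in
theorem abstract_main :
    ∃ L : List (Finset V), (∀ v, ∃ b ∈ L, v ∈ b) ∧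
      (∀ u, u ≠ r → ∃ b ∈ L, u ∈ b ∧ p u ∈ b) ∧
      (∀ u, IntvIn u L) ∧
      (∀ b ∈ L, b.card ≤ Nat.log 2 (Fintype.card V) + 1) ∧ L ≠ [] := by
  have hroot : desc p d r = Finset.univ := desc_root p r d hd0 hp
  have hcard : (desc p d r).card = Fintype.card V := by rw [hroot, Finset.card_univ]
  obtain spec := bags_spec p r d hd0 hp hpr (Fintype.card V) r (le_of_eq hcard)
  refine ⟨bags p d (Fintype.card V) r, ?_, ?_, spec.intv, ?_, spec.ne⟩
  · intro v
    exact spec.cover v (by rw [hroot]; exact Finset.mem_univ v)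
  · intro u hur
    exact spec.edge u (by rw [hroot]; exact Finset.mem_univ u) hur
  · intro b hb
    have := spec.size b hb
    rwa [hcard] at this

end Abstract


section Graph
open SimpleGraph
variable {V : Type} [Fintype V] [DecidableEq V] (G : SimpleGraph V) (hG : G.IsTree) (r : V)

include hG in
lemma exists_parent (v : V) (hv : v ≠ r) :
    ∃ u, G.Adj v u ∧ G.dist u r + 1 = G.dist v r := by
  have hconn := hG.isConnected
  have hreach : G.Reachable v r := hconn v r
  have hpos : 0 < G.dist v r := hconn.pos_dist_of_ne hv
  obtain ⟨w, hw⟩ := hreach.exists_walk_length_eq_dist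
  cases w with
  | nil => exact absurd rfl hv
  | @cons _ u _ h q =>
    refine ⟨u, h, ?_⟩
    have h1 : G.dist u r ≤ q.length := SimpleGraph.dist_le q
    have h2 : q.length + 1 = G.dist v r := by
      simpa using hw
    have h3 : G.dist v r ≤ G.dist v u + G.dist u r := hconn.dist_triangle
    have h4 : G.dist v u = 1 := SimpleGraph.dist_eq_one_iff_adj.mpr h
    omega

noncomputable def par (v : V) : V :=
  if hv : v = r then r else Classical.choose (exists_parent G hG r v hv)

lemma par_spec (v : V) (hv : v ≠ r) :
    G.Adj v (par G hG r v) ∧ G.dist (par G hG r v) r + 1 = G.dist v r := by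
  rw [par, dif_neg hv]
  exact Classical.choose_spec (exists_parent G hG r v hv)

lemma par_root : par G hG r r = r := by rw [par, dif_pos rfl]

noncomputable def wtr (v : V) : G.Walk v r :=
  if hv : v = r then (SimpleGraph.Walk.nil.copy hv.symm rfl)
  else SimpleGraph.Walk.cons (par_spec G hG r v hv).1 (wtr (par G hG r v))
termination_by G.dist v r
decreasing_by
  have := (par_spec G hG r v hv).2
  omega

lemma wtr_support : ∀ n (v : V), G.dist v r ≤ n →
    ∀ x ∈ (wtr G hG r v).support, x = v ∨ G.dist x r < G.dist v r := by
  intro n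
  induction n with
  | zero =>
    intro v hv x hx
    have hvr : v = r := (hG.isConnected.dist_eq_zero_iff).mp (by omega)
    subst hvr
    rw [wtr, dif_pos rfl] at hx
    rw [SimpleGraph.Walk.support_copy] at hx
    simp at hx
    exact Or.inl hx
  | succ n ihn =>
    intro v hv x hx
    by_cases hvr : v = r
    · subst hvr
      rw [wtr, dif_pos rfl] at hx
      rw [SimpleGraph.Walk.support_copy] at hx
      simp at hx
      exact Or.inl hx
    · rw [wtr, dif_neg hvr, SimpleGraph.Walk.support_cons] at hx
      rcases List.mem_cons.mp hx with rfl | hx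
      · exact Or.inl rfl
      · have hd := (par_spec G hG r v hvr).2
        rcases ihn (par G hG r v) (by omega) x hx with rfl | hlt
        · right; omega
        · right; omega

lemma wtr_length : ∀ n (v : V), G.dist v r ≤ n → (wtr G hG r v).length = G.dist v r := by
  intro n
  induction n with
  | zero =>
    intro v hv
    have hvr : v = r := (hG.isConnected.dist_eq_zero_iff).mp (by omega)
    subst hvr
    rw [wtr, dif_pos rfl]
    simp [SimpleGraph.Walk.length_copy]
  | succ n ihn =>
    intro v hv
    by_cases hvr : v = r
    · subst hvr
      rw [wtr, dif_pos rfl]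
      simp [SimpleGraph.Walk.length_copy]
    · rw [wtr, dif_neg hvr, SimpleGraph.Walk.length_cons]
      have hd := (par_spec G hG r v hvr).2
      rw [ihn (par G hG r v) (by omega)]
      omega

lemma wtr_isPath : ∀ n (v : V), G.dist v r ≤ n → (wtr G hG r v).IsPath := by
  intro n
  induction n with
  | zero =>
    intro v hv
    have hvr : v = r := (hG.isConnected.dist_eq_zero_iff).mp (by omega)
    subst hvr
    rw [wtr, dif_pos rfl, SimpleGraph.Walk.isPath_copy]
    exact SimpleGraph.Walk.IsPath.nil
  | succ n ihn =>
    intro v hv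
    by_cases hvr : v = r
    · subst hvr
      rw [wtr, dif_pos rfl, SimpleGraph.Walk.isPath_copy]
      exact SimpleGraph.Walk.IsPath.nil
    · rw [wtr, dif_neg hvr, SimpleGraph.Walk.cons_isPath_iff]
      have hd := (par_spec G hG r v hvr).2
      refine ⟨ihn (par G hG r v) (by omega), ?_⟩
      intro hmem
      rcases wtr_support G hG r (G.dist (par G hG r v) r) (par G hG r v) le_rfl v hmem
        with heq | hlt
      · rw [← heq] at hd; omega
      · omega

lemma adj_parent {u w : V} (h : G.Adj u w) (hlt : G.dist w r < G.dist u r) :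
    u ≠ r ∧ par G hG r u = w := by
  have hur : u ≠ r := by
    intro hu
    subst hu
    rw [hG.isConnected.dist_eq_zero_iff.mpr rfl] at hlt
    omega
  refine ⟨hur, ?_⟩
  have hb : G.dist w r + 1 = G.dist u r := by
    have h3 : G.dist u r ≤ G.dist u w + G.dist w r := hG.isConnected.dist_triangle
    have h4 : G.dist u w = 1 := SimpleGraph.dist_eq_one_iff_adj.mpr h
    omega
  -- two paths from u to r
  have hP2path : (SimpleGraph.Walk.cons h (wtr G hG r w)).IsPath := by
    rw [SimpleGraph.Walk.cons_isPath_iff]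
    refine ⟨wtr_isPath G hG r _ w le_rfl, ?_⟩
    intro hmem
    rcases wtr_support G hG r _ w le_rfl u hmem with rfl | hlt2
    · exact h.ne rfl
    · omega
  have hP1path : (wtr G hG r u).IsPath := wtr_isPath G hG r _ u le_rfl
  have hEq : (wtr G hG r u) = SimpleGraph.Walk.cons h (wtr G hG r w) := by
    have huniq := hG.existsUnique_path u r
    obtain ⟨P, -, hP⟩ := huniq
    rw [hP _ hP1path, hP _ hP2path]
  have hsupp := congrArg SimpleGraph.Walk.support hEq
  rw [SimpleGraph.Walk.support_cons] at hsupp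
  have hne : u ≠ r := hur
  rw [wtr, dif_neg hne, SimpleGraph.Walk.support_cons] at hsupp
  have h2 := congrArg List.head? hsupp
  simp only [List.head?_cons] at h2
  -- second element
  have h3 := congrArg List.tail hsupp
  simp only [List.tail_cons] at h3
  have h4 : (wtr G hG r (par G hG r u)).support.head? = some (par G hG r u) := by
    rw [SimpleGraph.Walk.support_eq_cons]
    simp only [List.head?_cons]
  have h5 : (wtr G hG r w).support.head? = some w := by
    rw [SimpleGraph.Walk.support_eq_cons]
    simp only [List.head?_cons]
  rw [h3] at h4
  rw [h5] at h4
  exact (Option.some_injective _ h4).symm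

include hG in
lemma adj_dist_ne {u w : V} (h : G.Adj u w) : G.dist u r ≠ G.dist w r := by
  intro heq
  have hwr : w ≠ r := by
    intro hw
    have h1 : G.dist w r = 0 := by
      rw [hw]; exact hG.isConnected.dist_eq_zero_iff.mpr rfl
    have h2 : u = r := hG.isConnected.dist_eq_zero_iff.mp (heq.trans h1)
    exact h.ne (h2.trans hw.symm)
  have hP2path : (SimpleGraph.Walk.cons h (wtr G hG r w)).IsPath := by
    rw [SimpleGraph.Walk.cons_isPath_iff]
    refine ⟨wtr_isPath G hG r _ w le_rfl, ?_⟩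
    intro hmem
    rcases wtr_support G hG r _ w le_rfl u hmem with rfl | hlt2
    · exact h.ne rfl
    · omega
  have hP1path : (wtr G hG r u).IsPath := wtr_isPath G hG r _ u le_rfl
  have hEq : (wtr G hG r u) = SimpleGraph.Walk.cons h (wtr G hG r w) := by
    obtain ⟨P, -, hP⟩ := hG.existsUnique_path u r
    rw [hP _ hP1path, hP _ hP2path]
  have hlen := congrArg SimpleGraph.Walk.length hEq
  rw [SimpleGraph.Walk.length_cons, wtr_length G hG r _ u le_rfl,
    wtr_length G hG r _ w le_rfl] at hlen
  omega

include hG in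
lemma adj_cases {u w : V} (h : G.Adj u w) :
    (u ≠ r ∧ par G hG r u = w) ∨ (w ≠ r ∧ par G hG r w = u) := by
  have hne := adj_dist_ne G hG r h
  rcases lt_or_gt_of_ne hne with hlt | hlt
  · exact Or.inr (adj_parent G hG r h.symm hlt)
  · exact Or.inl (adj_parent G hG r h hlt)

end Graph

/-- `IsPathDecomp G X` : the sequence of bags `X 0, …, X (ℓ-1)` is a path
decomposition of `G`: every vertex is in some bag, every edge has both
endpoints in a common bag, and the bags containing a fixed vertex form a
(nonempty) contiguous interval. -/
def IsPathDecomp {V : Type} (G : SimpleGraph V) {ℓ : ℕ} (X : Fin ℓ → Finset V) : Prop :=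
  (∀ v : V, ∃ i, v ∈ X i) ∧
  (∀ u v : V, G.Adj u v → ∃ i, u ∈ X i ∧ v ∈ X i) ∧
  (∀ (v : V) (i j k : Fin ℓ), i ≤ j → j ≤ k → v ∈ X i → v ∈ X k → v ∈ X j)

/-- Every tree on `n ≥ 2` vertices has a path decomposition of width at most
`log₂ n`, i.e. with every bag of size at most `log₂ n + 1`. -/
theorem tree_pathdecomp_log (V : Type) [Fintype V] (G : SimpleGraph V)
    (hG : G.IsTree) (hn : 2 ≤ Fintype.card V) :
    ∃ (ℓ : ℕ) (X : Fin ℓ → Finset V), IsPathDecomp G X ∧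
      ∀ i, (X i).card ≤ Nat.log 2 (Fintype.card V) + 1 := by
  classical
  have hne : Nonempty V := by
    rw [← Fintype.card_pos_iff]; omega
  obtain ⟨r⟩ := hne
  have hd0 : ∀ v, G.dist v r = 0 ↔ v = r := fun v => hG.isConnected.dist_eq_zero_iff
  have hp : ∀ v, v ≠ r → G.dist (par G hG r v) r + 1 = G.dist v r :=
    fun v hv => (par_spec G hG r v hv).2
  have hpr : par G hG r r = r := par_root G hG r
  obtain ⟨L, hcov, hedge, hintv, hsize, hLne⟩ :=
    abstract_main (par G hG r) r (fun v => G.dist v r) hd0 hp hpr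
  refine ⟨L.length, fun i => L.get i, ⟨?_, ?_, ?_⟩, ?_⟩
  · intro v
    obtain ⟨b, hb, hvb⟩ := hcov v
    obtain ⟨i, hi⟩ := List.mem_iff_get.mp hb
    refine ⟨i, ?_⟩
    show v ∈ L.get i
    rw [hi]; exact hvb
  · intro u w hadj
    rcases adj_cases G hG r hadj with ⟨hur, hpu⟩ | ⟨hwr, hpw⟩
    · obtain ⟨b, hb, hub, hpub⟩ := hedge u hur
      obtain ⟨i, hi⟩ := List.mem_iff_get.mp hb
      rw [hpu] at hpub
      refine ⟨i, ?_, ?_⟩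
      · show u ∈ L.get i
        rw [hi]; exact hub
      · show w ∈ L.get i
        rw [hi]; exact hpub
    · obtain ⟨b, hb, hwb, hpwb⟩ := hedge w hwr
      obtain ⟨i, hi⟩ := List.mem_iff_get.mp hb
      rw [hpw] at hpwb
      refine ⟨i, ?_, ?_⟩
      · show u ∈ L.get i
        rw [hi]; exact hpwb
      · show w ∈ L.get i
        rw [hi]; exact hwb
  · intro v i j k hij hjk hvi hvk
    have e : ∀ (a : Fin L.length), L.getD (a : ℕ) ∅ = L.get a := by
      intro a
      rw [List.getD_eq_getElem _ _ a.isLt, List.get_eq_getElem]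
    have h1 : v ∈ L.getD (i : ℕ) ∅ := by rw [e]; exact hvi
    have h3 : v ∈ L.getD (k : ℕ) ∅ := by rw [e]; exact hvk
    have h2 := hintv v (i : ℕ) (j : ℕ) (k : ℕ) hij hjk h1 h3
    rw [e] at h2
    exact h2
  · intro i
    exact hsize (L.get i) (List.get_mem L i)
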